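/- Let a : ℕ → ℝ^d be a sequence of vectors such that inf_{s ≠ t} ‖a_s − a_t‖ > 0. Then for every β > 0, sup_{t ∈ ℕ} ∑_{s=1}^∞ exp(−β ‖a_s − a_t‖) < ∞. -/

import Mathlib

open MeasureTheory Real Metric Set Module
open scoped ENNReal NNReal

/-- Pointwise domination of a decaying exponential by a power. -/
lemma exp_le_aux (d : ℕ) (β : ℝ) (hβ : 0 < β) :
    ∃ C : ℝ, 0 < C ∧ ∀ u : ℝ, 0 ≤ u →
      Real.exp (-β * u) ≤ C * (1 + u) ^ (-((d : ℝ) + 1)) := by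
  set n : ℕ := d + 1
  set γ : ℝ := β / n with hγdef
  have hn : (0:ℝ) < n := by positivity
  have hγ : 0 < γ := by positivity
  set m : ℝ := min 1 γ with hm
  have hm0 : 0 < m := lt_min one_pos hγ
  refine ⟨(1 / m) ^ n, by positivity, fun u hu => ?_⟩
  have h1u : (0:ℝ) < 1 + u := by linarith
  have key : (1 + u) ^ n ≤ (1 / m) ^ n * Real.exp (β * u) := by
    have h1 : m * (1 + u) ≤ Real.exp (γ * u) := by
      have := Real.add_one_le_exp (γ * u)
      have hmu : m * u ≤ γ * u := mul_le_mul_of_nonneg_right (min_le_right _ _) hu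
      have hm1 : m ≤ 1 := min_le_left _ _
      nlinarith
    have h2 : 1 + u ≤ (1 / m) * Real.exp (γ * u) := by
      rw [div_mul_eq_mul_div, le_div_iff₀ hm0, mul_comm]
      simpa [one_mul] using h1
    calc (1 + u) ^ n ≤ ((1 / m) * Real.exp (γ * u)) ^ n :=
          pow_le_pow_left₀ h1u.le h2 n
      _ = (1 / m) ^ n * Real.exp (γ * u) ^ n := mul_pow _ _ _
      _ = (1 / m) ^ n * Real.exp (β * u) := by
          rw [← Real.exp_nat_mul]
          congr 2
          field_simp [hγdef]
          rw [hγdef, mul_div_assoc', mul_div_cancel_left₀ _ hn.ne']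
          ring
  have hpow : (1 + u) ^ (-((d : ℝ) + 1)) = ((1 + u) ^ n)⁻¹ := by
    rw [← Real.rpow_natCast (1 + u) n, ← Real.rpow_neg h1u.le]
    norm_num [n]
  rw [hpow, ← div_eq_mul_inv, le_div_iff₀ (by positivity)]
  calc Real.exp (-β * u) * (1 + u) ^ n
      ≤ Real.exp (-β * u) * ((1 / m) ^ n * Real.exp (β * u)) :=
        mul_le_mul_of_nonneg_left key (Real.exp_pos _).le
    _ = (1 / m) ^ n := by
        rw [← mul_assoc, mul_comm (Real.exp (-β*u)), mul_assoc, ← Real.exp_add]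
        simp

theorem stmt_4 (d : ℕ) (a : ℕ → EuclideanSpace ℝ (Fin d))
    (hsep : ∃ ε > 0, ∀ s t : ℕ, s ≠ t → ε ≤ ‖a s - a t‖)
    (β : ℝ) (hβ : 0 < β) :
    ∃ M : ℝ, ∀ t : ℕ, (∑' s : ℕ, Real.exp (-β * ‖a s - a t‖)) ≤ M := by
  classical
  obtain ⟨ε, hε, hsep⟩ := hsep
  set r : ℝ := ε / 3 with hrdef
  have hr0 : 0 < r := by positivity
  -- finiteness of the model integral
  have hfin : (∫⁻ x : EuclideanSpace ℝ (Fin d), ENNReal.ofReal (Real.exp (-β * ‖x‖))) < ⊤ := by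
    obtain ⟨C, hC0, hC⟩ := exp_le_aux d β hβ
    have hdr : (finrank ℝ (EuclideanSpace ℝ (Fin d)) : ℝ) < (d : ℝ) + 1 := by
      simp [finrank_euclideanSpace_fin]
    calc (∫⁻ x : EuclideanSpace ℝ (Fin d), ENNReal.ofReal (Real.exp (-β * ‖x‖)))
        ≤ ∫⁻ x : EuclideanSpace ℝ (Fin d), ENNReal.ofReal C * ENNReal.ofReal ((1 + ‖x‖) ^ (-((d:ℝ)+1))) := by
          apply lintegral_mono
          intro x
          dsimp only
          rw [← ENNReal.ofReal_mul hC0.le]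
          exact ENNReal.ofReal_le_ofReal (hC ‖x‖ (norm_nonneg x))
      _ = ENNReal.ofReal C * ∫⁻ x : EuclideanSpace ℝ (Fin d), ENNReal.ofReal ((1 + ‖x‖) ^ (-((d:ℝ)+1))) :=
          lintegral_const_mul' _ _ ENNReal.ofReal_ne_top
      _ < ⊤ := ENNReal.mul_lt_top ENNReal.ofReal_lt_top (finite_integral_one_add_norm hdr)
  set I : ℝ≥0∞ := ∫⁻ x : EuclideanSpace ℝ (Fin d), ENNReal.ofReal (Real.exp (-β * ‖x‖)) with hIdef
  set v : ℝ≥0∞ := volume (closedBall (0 : EuclideanSpace ℝ (Fin d)) r) with hvdef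
  have hv0 : 0 < v := measure_closedBall_pos _ _ hr0
  have hvtop : v < ⊤ := measure_closedBall_lt_top
  set C : ℝ≥0∞ := ENNReal.ofReal (Real.exp (β * r)) * I / v with hCdef
  have hCtop : C ≠ ⊤ := by
    apply ne_of_lt
    apply ENNReal.div_lt_top _ hv0.ne'
    exact (ENNReal.mul_lt_top ENNReal.ofReal_lt_top hfin).ne
  refine ⟨C.toReal, fun t => ?_⟩
  -- the key bound in ℝ≥0∞
  have key : (∑' s : ℕ, ENNReal.ofReal (Real.exp (-β * ‖a s - a t‖))) ≤ C := by
    rw [hCdef, ENNReal.le_div_iff_mul_le (Or.inl hv0.ne') (Or.inl hvtop.ne)]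
    have hgmeas : Measurable fun x : EuclideanSpace ℝ (Fin d) => ENNReal.ofReal (Real.exp (-β * ‖x - a t‖)) := by
      fun_prop
    have hdisj : Pairwise (Function.onFun Disjoint fun s : ℕ => closedBall (a s) r) := by
      intro s s' hss'
      apply Set.disjoint_left.2
      intro x hx hx'
      have h1 : ‖a s - a s'‖ ≤ ‖a s - x‖ + ‖x - a s'‖ := by
        simpa using norm_sub_le_norm_sub_add_norm_sub (a s) x (a s')
      have h2 : ‖a s - x‖ ≤ r := by
        rw [← dist_eq_norm]; exact dist_comm (a s) x ▸ mem_closedBall.1 hx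
      have h3 : ‖x - a s'‖ ≤ r := by
        rw [← dist_eq_norm]; exact mem_closedBall.1 hx'
      have := hsep s s' hss'
      rw [hrdef] at h2 h3
      linarith
    have hterm : ∀ s : ℕ, ENNReal.ofReal (Real.exp (-β * ‖a s - a t‖)) * v ≤
        ENNReal.ofReal (Real.exp (β * r)) *
          ∫⁻ x in closedBall (a s) r, ENNReal.ofReal (Real.exp (-β * ‖x - a t‖)) := by
      intro s
      have hvs : volume (closedBall (a s) r) = v := by
        rw [hvdef, Measure.addHaar_closedBall_center]
      have hlow : ENNReal.ofReal (Real.exp (-β * (‖a s - a t‖ + r))) * v ≤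
          ∫⁻ x in closedBall (a s) r, ENNReal.ofReal (Real.exp (-β * ‖x - a t‖)) := by
        rw [← hvs, ← setLIntegral_const]
        apply setLIntegral_mono hgmeas
        intro x hx
        apply ENNReal.ofReal_le_ofReal
        apply Real.exp_le_exp.2
        have hxx : ‖x - a t‖ ≤ ‖a s - a t‖ + r := by
          have h1 : ‖x - a t‖ ≤ ‖x - a s‖ + ‖a s - a t‖ :=
            norm_sub_le_norm_sub_add_norm_sub x (a s) (a t)
          have h2 : ‖x - a s‖ ≤ r := by rw [← dist_eq_norm]; exact mem_closedBall.1 hx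
          linarith
        nlinarith
      calc ENNReal.ofReal (Real.exp (-β * ‖a s - a t‖)) * v
          = ENNReal.ofReal (Real.exp (β * r)) *
            (ENNReal.ofReal (Real.exp (-β * (‖a s - a t‖ + r))) * v) := by
            rw [← mul_assoc, ← ENNReal.ofReal_mul (Real.exp_pos _).le, ← Real.exp_add]
            ring_nf
        _ ≤ _ := mul_le_mul_right hlow _
    calc (∑' s : ℕ, ENNReal.ofReal (Real.exp (-β * ‖a s - a t‖))) * v
        = ∑' s : ℕ, ENNReal.ofReal (Real.exp (-β * ‖a s - a t‖)) * v :=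
          ENNReal.tsum_mul_right.symm
      _ ≤ ∑' s : ℕ, ENNReal.ofReal (Real.exp (β * r)) *
            ∫⁻ x in closedBall (a s) r, ENNReal.ofReal (Real.exp (-β * ‖x - a t‖)) :=
          ENNReal.tsum_le_tsum hterm
      _ = ENNReal.ofReal (Real.exp (β * r)) *
            ∑' s : ℕ, ∫⁻ x in closedBall (a s) r, ENNReal.ofReal (Real.exp (-β * ‖x - a t‖)) :=
          ENNReal.tsum_mul_left
      _ = ENNReal.ofReal (Real.exp (β * r)) *
            ∫⁻ x in ⋃ s : ℕ, closedBall (a s) r, ENNReal.ofReal (Real.exp (-β * ‖x - a t‖)) := by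
          rw [lintegral_iUnion (fun s => measurableSet_closedBall) hdisj]
      _ ≤ ENNReal.ofReal (Real.exp (β * r)) *
            ∫⁻ x : EuclideanSpace ℝ (Fin d), ENNReal.ofReal (Real.exp (-β * ‖x - a t‖)) := by
          gcongr
          exact Measure.restrict_le_self
      _ = ENNReal.ofReal (Real.exp (β * r)) * I := by
          rw [hIdef]
          congr 1
          exact lintegral_sub_right_eq_self (fun x => ENNReal.ofReal (Real.exp (-β * ‖x‖))) (a t)
  -- convert back to a real statement
  have hne : (∑' s : ℕ, ENNReal.ofReal (Real.exp (-β * ‖a s - a t‖))) ≠ ⊤ :=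
    (key.trans_lt (lt_of_le_of_ne le_top hCtop)).ne
  have hsummable := ENNReal.summable_toReal hne
  simp only [ENNReal.toReal_ofReal (Real.exp_pos _).le] at hsummable
  have heq : (∑' s : ℕ, Real.exp (-β * ‖a s - a t‖)) =
      (∑' s : ℕ, ENNReal.ofReal (Real.exp (-β * ‖a s - a t‖))).toReal := by
    rw [ENNReal.tsum_toReal_eq (fun s => ENNReal.ofReal_ne_top)]
    exact tsum_congr fun s => (ENNReal.toReal_ofReal (Real.exp_pos _).le).symm
  rw [heq]
  exact ENNReal.toReal_mono hCtop key
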